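/- The following two statements are equivalent: (1) every subset of ℝ has the perfect set property, i.e., every uncountable subset of ℝ contains a nonempty perfect set; (2) for every a₀, b₀ ∈ ℝ with a₀ < b₀ and for every uncountable set S ⊆ [a₀, b₀], player A has a winning strategy in the Cantor game on [a₀, b₀] with target set S. -/

import Mathlib

open Filter Set

/-- Data generating a generalized Cantor set: closed intervals
`I_{i₁,…,iₙ} = [c l, d l]` indexed by nonempty finite binary sequences
(`l : List Bool`, with the last entry the most recently added index),
inside a closed interval `[lo, hi]`, with diameters controlled by a strictly
decreasing positive sequence `e` tending to `0`. -/
structure GenCantor where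
  lo : ℝ
  hi : ℝ
  lo_lt_hi : lo < hi
  e : ℕ → ℝ
  e_pos : ∀ n : ℕ, 0 < e n
  e_anti : StrictAnti e
  e_lim : Filter.Tendsto e Filter.atTop (nhds 0)
  c : List Bool → ℝ
  d : List Bool → ℝ
  diam_pos : ∀ l : List Bool, l ≠ [] → 0 < d l - c l
  diam_lt : ∀ l : List Bool, l ≠ [] → d l - c l < e l.length
  root_sub : ∀ i : Bool, Set.Icc (c [i]) (d [i]) ⊆ Set.Icc lo hi
  nested : ∀ l : List Bool, l ≠ [] → ∀ i : Bool,
    Set.Icc (c (l ++ [i])) (d (l ++ [i])) ⊆ Set.Icc (c l) (d l)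
  disj : ∀ l : List Bool,
    Set.Icc (c (l ++ [false])) (d (l ++ [false])) ∩
      Set.Icc (c (l ++ [true])) (d (l ++ [true])) = ∅

/-- The generalized Cantor set generated by the data `G`:
`C = ⋂_{n ≥ 1} ⋃_{i₁,…,iₙ} I_{i₁,…,iₙ}`. -/
def GenCantor.C (G : GenCantor) : Set ℝ :=
  ⋂ n : ℕ, ⋃ l ∈ {l : List Bool | l.length = n + 1}, Set.Icc (G.c l) (G.d l)

/-- A set of reals is a generalized Cantor set if it is generated by some data. -/
def IsGenCantorSet (C : Set ℝ) : Prop := ∃ G : GenCantor, G.C = C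

/-- The length-`(n+1)` initial segment `[s 0, …, s n]` of a binary sequence. -/
def prefixSeq (s : ℕ → Bool) (n : ℕ) : List Bool := List.ofFn fun i : Fin (n + 1) => s i

/-- A set `P ⊆ ℝ` is perfect if it is closed and each of its points is a
limit point of `P`. -/
def PerfectSet (P : Set ℝ) : Prop := IsClosed P ∧ ∀ x ∈ P, x ∈ closure (P \ {x})

/-- A valid history for player A before A's move number `n+1`:
moves `a 0 = a₀ < a 1 < ⋯ < a n < b n < ⋯ < b 1 < b 0 = b₀`. -/
def ValidHistA (a₀ b₀ : ℝ) {n : ℕ} (a b : Fin (n + 1) → ℝ) : Prop :=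
  a 0 = a₀ ∧ b 0 = b₀ ∧ StrictMono a ∧ StrictAnti b ∧ a (Fin.last n) < b (Fin.last n)

/-- A strategy for player A in the Cantor game on `[a₀, b₀]`:
functions `f n` producing the move `a (n+1)` from the history
`(a 0, b 0, …, a n, b n)`, with `a n < f n a b < b n` on valid histories. -/
structure StratA (a₀ b₀ : ℝ) where
  f : (n : ℕ) → (Fin (n + 1) → ℝ) → (Fin (n + 1) → ℝ) → ℝ
  valid : ∀ (n : ℕ) (a b : Fin (n + 1) → ℝ), ValidHistA a₀ b₀ a b →
    a (Fin.last n) < f n a b ∧ f n a b < b (Fin.last n)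

/-- A valid history for player B before B's move number `n+1`:
`a 0 = a₀ < a 1 < ⋯ < a (n+1) < b n < ⋯ < b 1 < b 0 = b₀`. -/
def ValidHistB (a₀ b₀ : ℝ) {n : ℕ} (a : Fin (n + 2) → ℝ) (b : Fin (n + 1) → ℝ) : Prop :=
  a 0 = a₀ ∧ b 0 = b₀ ∧ StrictMono a ∧ StrictAnti b ∧ a (Fin.last (n + 1)) < b (Fin.last n)

/-- A strategy for player B in the Cantor game on `[a₀, b₀]`:
functions `g n` producing the move `b (n+1)` from the history
`(a 0, b 0, …, a n, b n, a (n+1))`, with `a (n+1) < g n a b < b n` on valid histories. -/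
structure StratB (a₀ b₀ : ℝ) where
  g : (n : ℕ) → (Fin (n + 2) → ℝ) → (Fin (n + 1) → ℝ) → ℝ
  valid : ∀ (n : ℕ) (a : Fin (n + 2) → ℝ) (b : Fin (n + 1) → ℝ), ValidHistB a₀ b₀ a b →
    a (Fin.last (n + 1)) < g n a b ∧ g n a b < b (Fin.last n)

/-- A play of the Cantor game on `[a₀, b₀]`:
`a (n-1) < a n < b n < b (n-1)` for all `n ≥ 1`. -/
def IsPlay (a₀ b₀ : ℝ) (a b : ℕ → ℝ) : Prop :=
  a 0 = a₀ ∧ b 0 = b₀ ∧ ∀ n : ℕ, a n < a (n + 1) ∧ a (n + 1) < b (n + 1) ∧ b (n + 1) < b n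

/-- A play is consistent with a strategy for A if each of A's moves is given by
the strategy applied to the preceding history. -/
def ConsistentA {a₀ b₀ : ℝ} (σ : StratA a₀ b₀) (a b : ℕ → ℝ) : Prop :=
  ∀ n : ℕ, a (n + 1) = σ.f n (fun i : Fin (n + 1) => a i) (fun i : Fin (n + 1) => b i)

/-- A play is consistent with a strategy for B if each of B's moves is given by
the strategy applied to the preceding history. -/
def ConsistentB {a₀ b₀ : ℝ} (σ : StratB a₀ b₀) (a b : ℕ → ℝ) : Prop :=
  ∀ n : ℕ, b (n + 1) = σ.g n (fun i : Fin (n + 2) => a i) (fun i : Fin (n + 1) => b i)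

/-- The limit set of a strategy for player A: all limits `lim aₙ` over plays
consistent with the strategy. -/
def limitSetA {a₀ b₀ : ℝ} (σ : StratA a₀ b₀) : Set ℝ :=
  {x | ∃ a b : ℕ → ℝ, IsPlay a₀ b₀ a b ∧ ConsistentA σ a b ∧
    Filter.Tendsto a Filter.atTop (nhds x)}

/-- The limit set of a strategy for player B: all limits `lim aₙ` over plays
consistent with the strategy. -/
def limitSetB {a₀ b₀ : ℝ} (σ : StratB a₀ b₀) : Set ℝ :=
  {x | ∃ a b : ℕ → ℝ, IsPlay a₀ b₀ a b ∧ ConsistentB σ a b ∧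
    Filter.Tendsto a Filter.atTop (nhds x)}

/-- A strategy for A is winning for target set `S` iff its limit set lies in `S`. -/
def WinningA {a₀ b₀ : ℝ} (σ : StratA a₀ b₀) (S : Set ℝ) : Prop := limitSetA σ ⊆ S

/-- A strategy for B is winning for target set `S` iff its limit set lies in
`[a₀, b₀] − S`. -/
def WinningB {a₀ b₀ : ℝ} (σ : StratB a₀ b₀) (S : Set ℝ) : Prop :=
  limitSetB σ ⊆ Set.Icc a₀ b₀ \ S

/-- `B` is a Bernstein set in `X ⊆ ℝ` (with its subspace topology) if `B ⊆ X` and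
neither `B` nor `X − B` contains a set that is uncountable and closed in `X`. -/
def IsBernsteinIn (X B : Set ℝ) : Prop :=
  B ⊆ X ∧
    (¬ ∃ T : Set ℝ, T ⊆ B ∧ ¬ T.Countable ∧ IsClosed (Subtype.val ⁻¹' T : Set X)) ∧
    (¬ ∃ T : Set ℝ, T ⊆ X \ B ∧ ¬ T.Countable ∧ IsClosed (Subtype.val ⁻¹' T : Set X))

/-- The set of right condensation points of `S` in `[a₀, b₀]`. -/
def rightCondPts (a₀ b₀ : ℝ) (S : Set ℝ) : Set ℝ :=
  {x ∈ Set.Icc a₀ b₀ | ∀ ε > 0, ¬ (Set.Ioo x (x + ε) ∩ S).Countable}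


open Set Filter

lemma exists_rightCond {T : Set ℝ} (hbdd : BddBelow T) (hT : ¬ T.Countable) :
    ∃ x ∈ T, ∀ ε > 0, ¬ (Ioo x (x + ε) ∩ T).Countable := by
  by_contra h
  push_neg at h
  apply hT
  have key : ∀ x ∈ T, ∃ q : ℚ, x < (q:ℝ) ∧ (Ioo x (q:ℝ) ∩ T).Countable := by
    intro x hx
    obtain ⟨ε, hε, hc⟩ := h x hx
    obtain ⟨q, hq1, hq2⟩ := exists_rat_btwn (lt_add_of_pos_right x hε)
    exact ⟨q, hq1, hc.mono (by intro y hy; exact ⟨⟨hy.1.1, hy.1.2.trans hq2⟩, hy.2⟩)⟩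
  have hsub : T ⊆ ⋃ q : ℚ, {x ∈ T | x < (q:ℝ) ∧ (Ioo x (q:ℝ) ∩ T).Countable} := by
    intro x hx
    obtain ⟨q, h1, h2⟩ := key x hx
    exact mem_iUnion.2 ⟨q, hx, h1, h2⟩
  refine Set.Countable.mono hsub (Set.countable_iUnion fun q => ?_)
  set A := {x ∈ T | x < (q:ℝ) ∧ (Ioo x (q:ℝ) ∩ T).Countable} with hA
  rcases A.eq_empty_or_nonempty with he | hne
  · simp [he]
  have hAbdd : BddBelow A := hbdd.mono (fun x hx => hx.1)
  set m := sInf A with hm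
  have hcover : A ⊆ {m} ∪ ⋃ r ∈ {r : ℚ | ∃ y ∈ A, y ≤ (r:ℝ)}, (Ioo (r:ℝ) (q:ℝ) ∩ T) := by
    intro x hx
    rcases eq_or_lt_of_le (csInf_le hAbdd hx) with heq | hlt
    · exact Or.inl heq.symm
    · obtain ⟨y, hy, hyx⟩ := (csInf_lt_iff hAbdd hne).1 hlt
      obtain ⟨r, hr1, hr2⟩ := exists_rat_btwn hyx
      refine Or.inr (mem_biUnion ⟨y, hy, le_of_lt hr1⟩ ⟨⟨hr2, hx.2.1⟩, hx.1⟩)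
  refine Set.Countable.mono hcover ((Set.countable_singleton m).union ?_)
  refine Set.Countable.biUnion (Set.to_countable _) ?_
  rintro r ⟨y, hy, hyr⟩
  exact hy.2.2.mono (by intro z hz; exact ⟨⟨hyr.trans_lt hz.1.1, hz.1.2⟩, hz.2⟩)

lemma perfectSet_iff {P : Set ℝ} : PerfectSet P ↔ Perfect P := by
  constructor
  · rintro ⟨h1, h2⟩
    exact ⟨h1, fun x hx => (accPt_principal_iff_clusterPt (x := x) (C := P)).2
      (mem_closure_iff_clusterPt.1 (h2 x hx))⟩
  · rintro ⟨h1, h2⟩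
    exact ⟨h1, fun x hx => mem_closure_iff_clusterPt.2
      ((accPt_principal_iff_clusterPt (x := x) (C := P)).1 (h2 x hx))⟩

lemma uncount_pi : Uncountable (ℕ → Bool) := by
  rw [← Cardinal.aleph0_lt_mk_iff]
  have h : (Cardinal.mk (ℕ → Bool)) = 2 ^ Cardinal.aleph0 := by
    simp [Cardinal.mk_arrow]
  rw [h, Cardinal.two_power_aleph0]
  exact Cardinal.aleph0_lt_continuum

lemma perfect_not_countable {P : Set ℝ} (hP : PerfectSet P) (hne : P.Nonempty) :
    ¬ P.Countable := by
  intro hc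
  obtain ⟨f, hrange, _, hinj⟩ := (perfectSet_iff.1 hP).exists_nat_bool_injection hne
  have h1 : Countable (ℕ → Bool) := by
    have hinj' : Function.Injective (fun s => (⟨f s, hrange ⟨s, rfl⟩⟩ : P)) := by
      intro s t hst
      exact hinj (congrArg Subtype.val hst)
    have := hc.to_subtype
    exact Function.Injective.countable hinj'
  exact (uncount_pi.not_countable) h1

lemma dir1 (hpsp : ∀ S : Set ℝ, ¬ S.Countable → ∃ P : Set ℝ, P.Nonempty ∧ PerfectSet P ∧ P ⊆ S) :
    ∀ a₀ b₀ : ℝ, a₀ < b₀ → ∀ S : Set ℝ, S ⊆ Set.Icc a₀ b₀ → ¬ S.Countable →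
      ∃ σ : StratA a₀ b₀, WinningA σ S := by
  intro a₀ b₀ hab S hS hSc
  obtain ⟨P, hPne, hPperf, hPS⟩ := hpsp S hSc
  have hPc : ¬ P.Countable := perfect_not_countable hPperf hPne
  have hPIcc : P ⊆ Set.Icc a₀ b₀ := hPS.trans hS
  -- Q : points of P that are right condensation points of P
  set Q : Set ℝ := {y | y ∈ P ∧ ∀ ε > 0, ¬ (Ioo y (y + ε) ∩ P).Countable} with hQdef
  -- from uncountable subsets of P we get Q points
  have hsubQ : ∀ T : Set ℝ, T ⊆ P → BddBelow T → ¬ T.Countable → ∃ y ∈ T, y ∈ Q := by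
    intro T hTP hTb hTc
    obtain ⟨y, hyT, hyrc⟩ := exists_rightCond hTb hTc
    refine ⟨y, hyT, hTP hyT, fun ε hε hc => hyrc ε hε (hc.mono ?_)⟩
    intro z hz
    exact ⟨hz.1, hTP hz.2⟩
  have key1 : ∃ y, y ∈ Q ∧ a₀ < y ∧ y < b₀ := by
    have hT : ¬ (P ∩ Ioo a₀ b₀).Countable := by
      intro hc
      apply hPc
      have : P ⊆ (P ∩ Ioo a₀ b₀) ∪ {a₀, b₀} := by
        intro x hx
        rcases eq_or_lt_of_le (hPIcc hx).1 with h1 | h1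
        · exact Or.inr (Or.inl h1.symm)
        rcases eq_or_lt_of_le (hPIcc hx).2 with h2 | h2
        · exact Or.inr (Or.inr h2)
        · exact Or.inl ⟨hx, h1, h2⟩
      exact (hc.union ((Set.countable_singleton _).insert _)).mono this
    obtain ⟨y, hyT, hyQ⟩ := hsubQ _ inter_subset_left
      ⟨a₀, fun x hx => (hPIcc hx.1).1⟩ hT
    exact ⟨y, hyQ, hyT.2.1, hyT.2.2⟩
  have key2 : ∀ x, x ∈ Q → ∀ v, x < v → ∃ y, y ∈ Q ∧ x < y ∧ y < v := by
    intro x hx v hv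
    have hT : ¬ (Ioo x v ∩ P).Countable := by
      have := hx.2 (v - x) (by linarith)
      rwa [add_sub_cancel] at this
    obtain ⟨y, hyT, hyQ⟩ := hsubQ _ inter_subset_right
      ⟨x, fun z hz => le_of_lt hz.1.1⟩ hT
    exact ⟨y, hyQ, hyT.1.1, hyT.1.2⟩
  -- the choice function
  classical
  set next : ℝ → ℝ → ℝ := fun u v =>
    if h : ∃ y, y ∈ Q ∧ u < y ∧ y < v then h.choose else (u + v) / 2 with hnextdef
  have hnext1 : ∀ u v, (∃ y, y ∈ Q ∧ u < y ∧ y < v) →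
      next u v ∈ Q ∧ u < next u v ∧ next u v < v := by
    intro u v h
    simp only [hnextdef, dif_pos h]
    exact h.choose_spec
  have hnext2 : ∀ u v : ℝ, u < v → u < next u v ∧ next u v < v := by
    intro u v huv
    by_cases h : ∃ y, y ∈ Q ∧ u < y ∧ y < v
    · exact (hnext1 u v h).2
    · simp only [hnextdef, dif_neg h]
      constructor <;> linarith
  refine ⟨⟨fun n a b => next (a (Fin.last n)) (b (Fin.last n)), ?_⟩, ?_⟩
  · intro n a b hv
    exact hnext2 _ _ hv.2.2.2.2
  -- winning
  rintro x ⟨a, b, hplay, hcons, hlim⟩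
  obtain ⟨ha0, hb0, hstep⟩ := hplay
  have hab : ∀ n, a n < b n := by
    intro n
    cases n with
    | zero => rw [ha0, hb0]; exact hab
    | succ m => exact (hstep m).2.1
  have haQ : ∀ n, a (n + 1) ∈ Q := by
    intro n
    induction n with
    | zero =>
      rw [hcons 0]
      show next (a ((Fin.last 0 : Fin 1) : ℕ)) (b ((Fin.last 0 : Fin 1) : ℕ)) ∈ Q
      have h0 : ((Fin.last 0 : Fin 1) : ℕ) = 0 := rfl
      rw [h0, ha0, hb0]
      exact (hnext1 _ _ key1).1
    | succ m ih =>
      rw [hcons (m + 1)]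
      show next (a ((Fin.last (m+1) : Fin (m+2)) : ℕ)) (b ((Fin.last (m+1) : Fin (m+2)) : ℕ)) ∈ Q
      have h0 : ((Fin.last (m+1) : Fin (m+2)) : ℕ) = m + 1 := rfl
      rw [h0]
      exact (hnext1 _ _ (key2 _ ih _ (hab (m + 1)))).1
  have hxP : x ∈ P := by
    have : x ∈ closure P := by
      refine mem_closure_of_tendsto hlim ?_
      filter_upwards [eventually_ge_atTop 1] with n hn
      obtain ⟨m, rfl⟩ := Nat.exists_eq_add_of_le' hn
      exact (haQ m).1
    rwa [hPperf.1.closure_eq] at this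
  exact hPS hxP

open Set Filter

noncomputable section Construction

variable {a₀ b₀ : ℝ} (σ : StratA a₀ b₀)

/-- Valid history predicate on packaged histories. -/
def VH (n : ℕ) (h : Fin (n + 1) → ℝ × ℝ) : Prop :=
  ValidHistA a₀ b₀ (fun i => (h i).1) (fun i => (h i).2)

def nextA (n : ℕ) (h : Fin (n + 1) → ℝ × ℝ) : ℝ :=
  σ.f n (fun i => (h i).1) (fun i => (h i).2)

def trueB (n : ℕ) (h : Fin (n + 1) → ℝ × ℝ) : ℝ :=
  nextA σ n h + min ((h (Fin.last n)).2 - nextA σ n h) ((1/2 : ℝ) ^ n) / 2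

def extT (n : ℕ) (h : Fin (n + 1) → ℝ × ℝ) : Fin (n + 2) → ℝ × ℝ :=
  Fin.snoc h (nextA σ n h, trueB σ n h)

def falseB (n : ℕ) (h : Fin (n + 1) → ℝ × ℝ) : ℝ :=
  nextA σ n h + min (nextA σ (n + 1) (extT σ n h) - nextA σ n h) ((1/2 : ℝ) ^ n) / 2

def extF (n : ℕ) (h : Fin (n + 1) → ℝ × ℝ) : Fin (n + 2) → ℝ × ℝ :=
  Fin.snoc h (nextA σ n h, falseB σ n h)

def hist (s : ℕ → Bool) : (n : ℕ) → Fin (n + 1) → ℝ × ℝ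
  | 0 => fun _ => (a₀, b₀)
  | n + 1 => if s n then extT σ n (hist s n) else extF σ n (hist s n)

lemma fst_snoc (n : ℕ) (h : Fin (n + 1) → ℝ × ℝ) (p : ℝ × ℝ) :
    (fun i : Fin (n + 2) => ((Fin.snoc h p : Fin (n+2) → ℝ × ℝ) i).1) = Fin.snoc (fun i => (h i).1) p.1 := by
  funext i
  refine Fin.lastCases ?_ (fun j => ?_) i <;> simp

lemma snd_snoc (n : ℕ) (h : Fin (n + 1) → ℝ × ℝ) (p : ℝ × ℝ) :
    (fun i : Fin (n + 2) => ((Fin.snoc h p : Fin (n+2) → ℝ × ℝ) i).2) = Fin.snoc (fun i => (h i).2) p.2 := by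
  funext i
  refine Fin.lastCases ?_ (fun j => ?_) i <;> simp

lemma pow_half_pos (n : ℕ) : (0:ℝ) < (1/2 : ℝ) ^ n := by positivity

lemma valid_snoc {n : ℕ} {h : Fin (n + 1) → ℝ × ℝ} (hv : VH (a₀ := a₀) (b₀ := b₀) n h)
    {A B : ℝ} (h1 : (h (Fin.last n)).1 < A) (h2 : A < B) (h3 : B < (h (Fin.last n)).2) :
    VH (a₀ := a₀) (b₀ := b₀) (n + 1) (Fin.snoc h (A, B)) := by
  obtain ⟨ha0, hb0, hmono, hanti, hlast⟩ := hv
  rw [VH, ValidHistA, fst_snoc, snd_snoc]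
  refine ⟨?_, ?_, ?_, ?_, ?_⟩
  · rw [← Fin.castSucc_zero, Fin.snoc_castSucc]; exact ha0
  · rw [← Fin.castSucc_zero, Fin.snoc_castSucc]; exact hb0
  · rw [Fin.strictMono_iff_lt_succ]
    intro i
    refine Fin.lastCases ?_ (fun j => ?_) i
    · rw [Fin.snoc_castSucc, Fin.succ_last, Fin.snoc_last]; exact h1
    · rw [Fin.snoc_castSucc, Fin.succ_castSucc, Fin.snoc_castSucc]
      exact hmono (Fin.castSucc_lt_succ (i := j))
  · rw [Fin.strictAnti_iff_succ_lt]
    intro i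
    refine Fin.lastCases ?_ (fun j => ?_) i
    · rw [Fin.snoc_castSucc, Fin.succ_last, Fin.snoc_last]
      exact lt_of_lt_of_le h3 (le_of_eq rfl)
    · rw [Fin.snoc_castSucc, Fin.succ_castSucc, Fin.snoc_castSucc]
      exact hanti (Fin.castSucc_lt_succ (i := j))
  · simp only [Fin.snoc_last]; exact h2

lemma nextA_bounds {n : ℕ} {h : Fin (n + 1) → ℝ × ℝ} (hv : VH (a₀ := a₀) (b₀ := b₀) n h) :
    (h (Fin.last n)).1 < nextA σ n h ∧ nextA σ n h < (h (Fin.last n)).2 :=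
  σ.valid n _ _ hv

lemma trueB_bounds {n : ℕ} {h : Fin (n + 1) → ℝ × ℝ} (hv : VH (a₀ := a₀) (b₀ := b₀) n h) :
    nextA σ n h < trueB σ n h ∧ trueB σ n h < (h (Fin.last n)).2 ∧
      trueB σ n h - nextA σ n h ≤ (1/2 : ℝ) ^ n / 2 := by
  have hb := (nextA_bounds σ hv).2
  have hp := pow_half_pos n
  have hmin1 : min ((h (Fin.last n)).2 - nextA σ n h) ((1/2 : ℝ) ^ n) > 0 :=
    lt_min (by linarith) hp
  have hmin2 : min ((h (Fin.last n)).2 - nextA σ n h) ((1/2 : ℝ) ^ n) ≤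
      (h (Fin.last n)).2 - nextA σ n h := min_le_left _ _
  have hmin3 : min ((h (Fin.last n)).2 - nextA σ n h) ((1/2 : ℝ) ^ n) ≤ (1/2 : ℝ) ^ n :=
    min_le_right _ _
  refine ⟨by rw [trueB]; linarith, by rw [trueB]; linarith, by rw [trueB]; linarith⟩

lemma VH_extT {n : ℕ} {h : Fin (n + 1) → ℝ × ℝ} (hv : VH (a₀ := a₀) (b₀ := b₀) n h) :
    VH (a₀ := a₀) (b₀ := b₀) (n + 1) (extT σ n h) :=
  valid_snoc hv (nextA_bounds σ hv).1 (trueB_bounds σ hv).1 (trueB_bounds σ hv).2.1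

lemma A'_bounds {n : ℕ} {h : Fin (n + 1) → ℝ × ℝ} (hv : VH (a₀ := a₀) (b₀ := b₀) n h) :
    nextA σ n h < nextA σ (n + 1) (extT σ n h) ∧
      nextA σ (n + 1) (extT σ n h) < trueB σ n h := by
  have := nextA_bounds σ (VH_extT σ hv)
  rwa [show (extT σ n h (Fin.last (n+1))) = (nextA σ n h, trueB σ n h) from Fin.snoc_last _ _]
    at this

lemma falseB_bounds {n : ℕ} {h : Fin (n + 1) → ℝ × ℝ} (hv : VH (a₀ := a₀) (b₀ := b₀) n h) :
    nextA σ n h < falseB σ n h ∧ falseB σ n h < nextA σ (n + 1) (extT σ n h) ∧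
      falseB σ n h - nextA σ n h ≤ (1/2 : ℝ) ^ n / 2 := by
  have hb := (A'_bounds σ hv).1
  have hp := pow_half_pos n
  have hmin1 : min (nextA σ (n + 1) (extT σ n h) - nextA σ n h) ((1/2 : ℝ) ^ n) > 0 :=
    lt_min (by linarith) hp
  have hmin2 : min (nextA σ (n + 1) (extT σ n h) - nextA σ n h) ((1/2 : ℝ) ^ n) ≤
      nextA σ (n + 1) (extT σ n h) - nextA σ n h := min_le_left _ _
  have hmin3 : min (nextA σ (n + 1) (extT σ n h) - nextA σ n h) ((1/2 : ℝ) ^ n) ≤ (1/2 : ℝ) ^ n :=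
    min_le_right _ _
  refine ⟨by rw [falseB]; linarith, by rw [falseB]; linarith, by rw [falseB]; linarith⟩

lemma VH_extF {n : ℕ} {h : Fin (n + 1) → ℝ × ℝ} (hv : VH (a₀ := a₀) (b₀ := b₀) n h) :
    VH (a₀ := a₀) (b₀ := b₀) (n + 1) (extF σ n h) := by
  have h1 := (falseB_bounds σ hv).1
  have h2 := (falseB_bounds σ hv).2.1
  have h3 := (A'_bounds σ hv).2
  have h4 := (trueB_bounds σ hv).2.1
  exact valid_snoc hv (nextA_bounds σ hv).1 h1 (by linarith)

lemma hist_valid (hab : a₀ < b₀) (s : ℕ → Bool) :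
    ∀ n, VH (a₀ := a₀) (b₀ := b₀) n (hist σ s n) := by
  intro n
  induction n with
  | zero =>
    refine ⟨rfl, rfl, ?_, ?_, hab⟩
    · intro i j hij; exact absurd hij (by omega)
    · intro i j hij; exact absurd hij (by omega)
  | succ m ih =>
    rw [hist]
    by_cases hs : s m
    · rw [if_pos hs]; exact VH_extT σ ih
    · rw [if_neg hs]; exact VH_extF σ ih

lemma hist_succ_castSucc (s : ℕ → Bool) (n : ℕ) (i : Fin (n + 1)) :
    hist σ s (n + 1) (Fin.castSucc i) = hist σ s n i := by
  rw [hist]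
  by_cases hs : s n
  · rw [if_pos hs]; simp [extT]
  · rw [if_neg hs]; simp [extF]

lemma aS_succ (s : ℕ → Bool) (n : ℕ) :
    (hist σ s (n + 1) (Fin.last (n + 1))).1 = nextA σ n (hist σ s n) := by
  rw [hist]
  by_cases hs : s n
  · rw [if_pos hs]; simp [extT]
  · rw [if_neg hs]; simp [extF]

lemma bS_succ (s : ℕ → Bool) (n : ℕ) :
    (hist σ s (n + 1) (Fin.last (n + 1))).2 =
      if s n then trueB σ n (hist σ s n) else falseB σ n (hist σ s n) := by
  rw [hist]
  by_cases hs : s n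
  · rw [if_pos hs, if_pos hs]; simp [extT]
  · rw [if_neg hs, if_neg hs]; simp [extF]

def aS (s : ℕ → Bool) (n : ℕ) : ℝ := (hist σ s n (Fin.last n)).1
def bS (s : ℕ → Bool) (n : ℕ) : ℝ := (hist σ s n (Fin.last n)).2

lemma hist_stable (s : ℕ → Bool) :
    ∀ n (i : Fin (n + 1)), hist σ s n i = hist σ s (i : ℕ) (Fin.last (i : ℕ)) := by
  intro n
  induction n with
  | zero =>
    intro i
    have hi : (i : ℕ) = 0 := by omega
    rw [hi]
    rfl
  | succ m ih =>
    intro i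
    refine Fin.lastCases ?_ (fun j => ?_) i
    · rfl
    · rw [hist_succ_castSucc]
      exact ih j

lemma aS_tuple (s : ℕ → Bool) (n : ℕ) :
    (fun i : Fin (n + 1) => aS σ s (i : ℕ)) = fun i => (hist σ s n i).1 := by
  funext i
  rw [aS, hist_stable σ s n i]

lemma bS_tuple (s : ℕ → Bool) (n : ℕ) :
    (fun i : Fin (n + 1) => bS σ s (i : ℕ)) = fun i => (hist σ s n i).2 := by
  funext i
  rw [bS, hist_stable σ s n i]

lemma play_step (hab : a₀ < b₀) (s : ℕ → Bool) (n : ℕ) :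
    aS σ s n < aS σ s (n + 1) ∧ aS σ s (n + 1) < bS σ s (n + 1) ∧ bS σ s (n + 1) < bS σ s n := by
  have hv := hist_valid σ hab s n
  have h1 := (nextA_bounds σ hv).1
  have ht := trueB_bounds σ hv
  have hf := falseB_bounds σ hv
  have hA' := A'_bounds σ hv
  rw [aS, aS, bS, bS, aS_succ, bS_succ]
  by_cases hs : s n
  · rw [if_pos hs]
    exact ⟨h1, ht.1, ht.2.1⟩
  · rw [if_neg hs]
    refine ⟨h1, hf.1, ?_⟩
    calc falseB σ n (hist σ s n) < nextA σ (n+1) (extT σ n (hist σ s n)) := hf.2.1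
    _ < trueB σ n (hist σ s n) := hA'.2
    _ < (hist σ s n (Fin.last n)).2 := ht.2.1

lemma diam_step (hab : a₀ < b₀) (s : ℕ → Bool) (n : ℕ) :
    bS σ s (n + 1) - aS σ s (n + 1) ≤ (1/2 : ℝ) ^ n / 2 := by
  have hv := hist_valid σ hab s n
  rw [aS, bS, aS_succ, bS_succ]
  by_cases hs : s n
  · rw [if_pos hs]; exact (trueB_bounds σ hv).2.2
  · rw [if_neg hs]; exact (falseB_bounds σ hv).2.2

lemma isPlay_aS (s : ℕ → Bool) (hab : a₀ < b₀) : IsPlay a₀ b₀ (aS σ s) (bS σ s) :=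
  ⟨rfl, rfl, fun n => play_step σ hab s n⟩

lemma consistent_aS (s : ℕ → Bool) : ConsistentA σ (aS σ s) (bS σ s) := by
  intro n
  show aS σ s (n + 1) = _
  rw [aS, aS_succ, aS_tuple, bS_tuple]
  rfl

lemma aS_mono (hab : a₀ < b₀) (s : ℕ → Bool) : Monotone (aS σ s) :=
  monotone_nat_of_le_succ fun n => (play_step σ hab s n).1.le

lemma bS_anti (hab : a₀ < b₀) (s : ℕ → Bool) : Antitone (bS σ s) :=
  antitone_nat_of_succ_le fun n => (play_step σ hab s n).2.2.le

lemma aS_lt_bS (hab : a₀ < b₀) (s : ℕ → Bool) (n k : ℕ) : aS σ s n < bS σ s k := by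
  have hm : ∀ m, aS σ s m < bS σ s m := by
    intro m
    cases m with
    | zero => exact hab
    | succ l => exact (play_step σ hab s l).2.1
  calc aS σ s n ≤ aS σ s (max n k) := aS_mono σ hab s (le_max_left n k)
  _ < bS σ s (max n k) := hm _
  _ ≤ bS σ s k := bS_anti σ hab s (le_max_right n k)

def xlim (s : ℕ → Bool) : ℝ := ⨆ n, aS σ s n

lemma aS_bdd (hab : a₀ < b₀) (s : ℕ → Bool) : BddAbove (Set.range (aS σ s)) := by
  refine ⟨bS σ s 0, ?_⟩
  rintro x ⟨n, rfl⟩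
  exact (aS_lt_bS σ hab s n 0).le

lemma tendsto_xlim (hab : a₀ < b₀) (s : ℕ → Bool) :
    Tendsto (aS σ s) atTop (nhds (xlim σ s)) :=
  tendsto_atTop_ciSup (aS_mono σ hab s) (aS_bdd σ hab s)

lemma xlim_mem (hab : a₀ < b₀) (s : ℕ → Bool) : xlim σ s ∈ limitSetA σ :=
  ⟨aS σ s, bS σ s, isPlay_aS σ s hab, consistent_aS σ s, tendsto_xlim σ hab s⟩

lemma aS_le_xlim (hab : a₀ < b₀) (s : ℕ → Bool) (n : ℕ) : aS σ s n ≤ xlim σ s :=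
  le_ciSup (aS_bdd σ hab s) n

lemma xlim_le_bS (hab : a₀ < b₀) (s : ℕ → Bool) (k : ℕ) : xlim σ s ≤ bS σ s k :=
  ciSup_le fun n => (aS_lt_bS σ hab s n k).le

lemma hist_agree {s t : ℕ → Bool} :
    ∀ n, (∀ i, i < n → s i = t i) → hist σ s n = hist σ t n := by
  intro n
  induction n with
  | zero => intro _; rfl
  | succ m ih =>
    intro h
    rw [hist, hist, ih (fun i hi => h i (by omega)), h m (by omega)]

lemma sep (hab : a₀ < b₀) {s t : ℕ → Bool} {n : ℕ}
    (hst : hist σ s n = hist σ t n) (hs : s n = true) (ht : t n = false) :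
    xlim σ t < xlim σ s := by
  have hv := hist_valid σ hab s n
  have h1 : xlim σ t ≤ falseB σ n (hist σ s n) := by
    have := xlim_le_bS σ hab t (n + 1)
    rwa [bS, bS_succ, if_neg (by simp [ht]), ← hst] at this
  have h2 : nextA σ (n + 1) (extT σ n (hist σ s n)) ≤ xlim σ s := by
    have := aS_le_xlim σ hab s (n + 2)
    rwa [aS, aS_succ, hist, if_pos (by simp [hs])] at this
  have h3 := (falseB_bounds σ hv).2.1
  linarith

lemma xlim_inj (hab : a₀ < b₀) {s t : ℕ → Bool} (hst : s ≠ t) : xlim σ s ≠ xlim σ t := by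
  have hex : ∃ n, s n ≠ t n := by
    by_contra h
    push_neg at h
    exact hst (funext h)
  classical
  set n := Nat.find hex with hn
  have hagree : ∀ i, i < n → s i = t i := fun i hi => by
    have := Nat.find_min hex hi
    simpa using this
  have hne : s n ≠ t n := Nat.find_spec hex
  have hh := hist_agree σ n hagree
  cases hsn : s n with
  | true =>
    have htn : t n = false := by
      cases htn : t n
      · rfl
      · exact absurd (hsn.trans htn.symm) hne
    exact (sep σ hab hh hsn htn).ne'
  | false =>
    have htn : t n = true := by
      cases htn : t n
      · exact absurd (hsn.trans htn.symm) hne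
      · rfl
    exact (sep σ hab hh.symm htn hsn).ne

lemma xlim_dist (hab : a₀ < b₀) {s t : ℕ → Bool} {n : ℕ}
    (h : ∀ i, i < n + 1 → s i = t i) : |xlim σ s - xlim σ t| ≤ (1/2 : ℝ) ^ n := by
  have hh := hist_agree σ (n + 1) h
  have has : aS σ s (n + 1) = aS σ t (n + 1) := by rw [aS, aS, hh]
  have hbs : bS σ s (n + 1) = bS σ t (n + 1) := by rw [bS, bS, hh]
  have h1 := aS_le_xlim σ hab s (n + 1)
  have h2 := xlim_le_bS σ hab s (n + 1)
  have h3 := aS_le_xlim σ hab t (n + 1)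
  have h4 := xlim_le_bS σ hab t (n + 1)
  have h5 := diam_step σ hab s n
  have hp := pow_half_pos n
  rw [abs_sub_le_iff]
  constructor <;> linarith [hbs ▸ h4, has ▸ h3]

lemma xlim_continuous (hab : a₀ < b₀) : Continuous (xlim σ) := by
  rw [continuous_iff_continuousAt]
  intro s
  rw [ContinuousAt, Metric.tendsto_nhds]
  intro ε hε
  obtain ⟨n, hn⟩ := exists_pow_lt_of_lt_one hε (by norm_num : (1/2 : ℝ) < 1)
  have hopen : IsOpen {t : ℕ → Bool | ∀ i ∈ Finset.range (n + 1), t i = s i} := by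
    have : {t : ℕ → Bool | ∀ i ∈ Finset.range (n + 1), t i = s i} =
        ⋂ i ∈ Finset.range (n + 1), (fun t : ℕ → Bool => t i) ⁻¹' {s i} := by
      ext t; simp
    rw [this]
    exact isOpen_biInter_finset fun i _ => (continuous_apply i).isOpen_preimage _ trivial
  have hmem : s ∈ {t : ℕ → Bool | ∀ i ∈ Finset.range (n + 1), t i = s i} := fun i _ => rfl
  filter_upwards [hopen.mem_nhds hmem] with t ht
  have : |xlim σ t - xlim σ s| ≤ (1/2 : ℝ) ^ n :=
    xlim_dist σ hab fun i hi => ht i (Finset.mem_range.2 hi)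
  calc dist (xlim σ t) (xlim σ s) = |xlim σ t - xlim σ s| := rfl
  _ ≤ (1/2 : ℝ) ^ n := this
  _ < ε := hn

lemma strat_perfect (hab : a₀ < b₀) :
    ∃ P : Set ℝ, P.Nonempty ∧ PerfectSet P ∧ P ⊆ limitSetA σ := by
  classical
  refine ⟨Set.range (xlim σ), ⟨xlim σ (fun _ => true), ⟨_, rfl⟩⟩, ⟨?_, ?_⟩, ?_⟩
  · -- closed
    have : Set.range (xlim σ) = xlim σ '' Set.univ := (Set.image_univ).symm
    rw [this]
    exact (isCompact_univ.image (xlim_continuous σ hab)).isClosed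
  · -- every point a limit point
    rintro x ⟨s, rfl⟩
    have hseq : Tendsto (fun k : ℕ => xlim σ (Function.update s (k + 1) (!(s (k + 1)))))
        atTop (nhds (xlim σ s)) := by
      rw [tendsto_iff_dist_tendsto_zero]
      refine squeeze_zero (fun k => dist_nonneg) (fun k => ?_)
        (tendsto_pow_atTop_nhds_zero_of_lt_one (by norm_num : (0:ℝ) ≤ 1/2) (by norm_num))
      show dist _ _ ≤ (1/2 : ℝ) ^ k
      rw [Real.dist_eq]
      refine xlim_dist σ hab fun i hi => ?_
      rw [Function.update_of_ne (by omega)]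
    refine mem_closure_of_tendsto hseq ?_
    filter_upwards with k
    refine ⟨⟨_, rfl⟩, ?_⟩
    simp only [Set.mem_singleton_iff]
    refine xlim_inj σ hab ?_
    intro h
    have := congrFun h (k + 1)
    rw [Function.update_self] at this
    exact (Bool.not_ne_self _ ) this
  · rintro x ⟨s, rfl⟩
    exact xlim_mem σ hab s

end Construction

/-- Every subset of ℝ has the perfect set property iff player A has
a winning strategy in every Cantor game with an uncountable target set. -/
theorem stmt9 :
    (∀ S : Set ℝ, ¬ S.Countable → ∃ P : Set ℝ, P.Nonempty ∧ PerfectSet P ∧ P ⊆ S) ↔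
    (∀ a₀ b₀ : ℝ, a₀ < b₀ → ∀ S : Set ℝ, S ⊆ Set.Icc a₀ b₀ → ¬ S.Countable →
      ∃ σ : StratA a₀ b₀, WinningA σ S) := by
  constructor
  · exact dir1
  · intro hgame S hSc
    have h1 : ¬ ∀ n : ℤ, (S ∩ Set.Icc (n : ℝ) ((n : ℝ) + 1)).Countable := by
      intro h
      apply hSc
      have hsub : S ⊆ ⋃ n : ℤ, S ∩ Set.Icc (n : ℝ) ((n : ℝ) + 1) := by
        intro x hx
        exact Set.mem_iUnion.2 ⟨⌊x⌋, hx, Int.floor_le x, (Int.lt_floor_add_one x).le⟩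
      exact (Set.countable_iUnion h).mono hsub
    push_neg at h1
    obtain ⟨n, hn⟩ := h1
    obtain ⟨σ, hσ⟩ := hgame (n : ℝ) ((n : ℝ) + 1) (lt_add_one _)
      (S ∩ Set.Icc (n : ℝ) ((n : ℝ) + 1)) Set.inter_subset_right hn
    obtain ⟨P, hPne, hPperf, hPsub⟩ := strat_perfect σ (lt_add_one _)
    exact ⟨P, hPne, hPperf, fun x hx => (hσ (hPsub hx)).1⟩
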